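/- For F ∈ 𝓗₊ ∪ 𝓗₋ and real numbers a ≥ 1, b ≥ 1, one has a·Γ_{F^#}^{(a-1,b)} = b·Γ_F^{(b-1,a)}, where F^#(x,y) := F(y,x) and Γ_F^{(i,j)} := ∫₀^∞ t^i (T_F(t))^j dt. -/

import Mathlib

open MeasureTheory Filter Set Real
open scoped Classical

/-- The class 𝓗₊. -/
def HPlus (F : ℝ → ℝ → ℝ) : Prop :=
  ContinuousOn (fun p : ℝ × ℝ => F p.1 p.2) {p | 0 < p.1 ∧ 0 < p.2} ∧
  (∀ x y, 0 < x → 0 < y → 0 < F x y) ∧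
  (∀ x x' y y', 0 < x → 0 < y → x ≤ x' → y ≤ y' → F x y ≤ F x' y') ∧
  (∀ a x y, 0 < a → 0 < x → 0 < y → F (a * x) (a * y) = a * F x y) ∧
  (∀ x y, 0 < x → 0 < y → max x y ≤ F x y) ∧
  (∀ y, 0 < y →
    Tendsto (fun x => F x y) (nhdsWithin 0 (Set.Ioi 0)) (nhds y) ∧
    Tendsto (fun x => F y x) (nhdsWithin 0 (Set.Ioi 0)) (nhds y))

/-- The class 𝓗₋. -/
def HMinus (F : ℝ → ℝ → ℝ) : Prop :=
  ContinuousOn (fun p : ℝ × ℝ => F p.1 p.2) {p | 0 < p.1 ∧ 0 < p.2} ∧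
  (∀ x y, 0 < x → 0 < y → 0 < F x y) ∧
  (∀ x x' y y', 0 < x → 0 < y → x ≤ x' → y ≤ y' → F x y ≤ F x' y') ∧
  (∀ a x y, 0 < a → 0 < x → 0 < y → F (a * x) (a * y) = a * F x y) ∧
  (∀ x y, 0 < x → 0 < y → F x y ≤ min x y) ∧
  (∀ y, 0 < y →
    Tendsto (fun x => F x y) atTop (nhds y) ∧
    Tendsto (fun x => F y x) atTop (nhds y))

/-- The associated element F* of 𝓗₊. -/
noncomputable def Fstar (F : ℝ → ℝ → ℝ) : ℝ → ℝ → ℝ :=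
  if HPlus F then F else fun x y => (F x⁻¹ y⁻¹)⁻¹

/-- T_F(t) := sup { z : F*(e^{-t}, e^{-z}) ≥ 1 }. -/
noncomputable def TF (F : ℝ → ℝ → ℝ) (t : ℝ) : ℝ :=
  sSup {z : ℝ | 1 ≤ Fstar F (Real.exp (-t)) (Real.exp (-z))}

/-- T_F^-(t) := inf { z : F*(e^{-t}, e^{-z}) ≤ 1 }. -/
noncomputable def TFminus (F : ℝ → ℝ → ℝ) (t : ℝ) : ℝ :=
  sInf {z : ℝ | Fstar F (Real.exp (-t)) (Real.exp (-z)) ≤ 1}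

/-- r_F := log F*(1,1). -/
noncomputable def rF (F : ℝ → ℝ → ℝ) : ℝ := Real.log (Fstar F 1 1)

/-- Γ_F^{(a,b)} := ∫₀^∞ t^a (T_F(t))^b dt, as an extended nonnegative real. -/
noncomputable def Gamma (F : ℝ → ℝ → ℝ) (a b : ℝ) : ENNReal :=
  ∫⁻ t in Set.Ioi (0 : ℝ), ENNReal.ofReal (t ^ a * (TF F t) ^ b)

/-- F^#(x,y) := F(y,x). -/
def Fsharp (F : ℝ → ℝ → ℝ) : ℝ → ℝ → ℝ := fun x y => F y x

section StmtNineAux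

open Topology

lemma hplus_sharp {F : ℝ → ℝ → ℝ} (hF : HPlus F) : HPlus (Fsharp F) := by
  obtain ⟨hc, hpos, hmono, hhom, hmax, hlim⟩ := hF
  refine ⟨?_, ?_, ?_, ?_, ?_, ?_⟩
  · have hswap : ContinuousOn (fun p : ℝ × ℝ => (p.2, p.1))
        {p : ℝ × ℝ | 0 < p.1 ∧ 0 < p.2} :=
      (continuous_snd.prodMk continuous_fst).continuousOn
    exact hc.comp hswap (fun p hp => ⟨hp.2, hp.1⟩)
  · exact fun x y hx hy => hpos y x hy hx
  · exact fun x x' y y' hx hy hxx hyy => hmono y y' x x' hy hx hyy hxx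
  · exact fun a x y ha hx hy => hhom a y x ha hy hx
  · intro x y hx hy
    have h := hmax y x hy hx
    rw [max_comm]
    exact h
  · exact fun y hy => ⟨(hlim y hy).2, (hlim y hy).1⟩

lemma not_hplus_of_hminus {F : ℝ → ℝ → ℝ} (hF : HMinus F) : ¬ HPlus F := by
  intro hP
  have h1 := hP.2.2.2.2.1 1 2 one_pos two_pos
  have h2 := hF.2.2.2.2.1 1 2 one_pos two_pos
  rw [max_eq_right one_le_two] at h1
  rw [min_eq_left one_le_two] at h2
  linarith

lemma Fstar_eq_pos {F : ℝ → ℝ → ℝ} (h : HPlus F) : Fstar F = F := if_pos h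

lemma Fstar_eq_neg {F : ℝ → ℝ → ℝ} (h : ¬ HPlus F) :
    Fstar F = fun x y => (F x⁻¹ y⁻¹)⁻¹ := if_neg h

lemma hplus_fstar {F : ℝ → ℝ → ℝ} (hF : HPlus F ∨ HMinus F) : HPlus (Fstar F) := by
  rcases hF with hF | hF
  · rw [Fstar_eq_pos hF]; exact hF
  · rw [Fstar_eq_neg (not_hplus_of_hminus hF)]
    obtain ⟨hc, hpos, hmono, hhom, hmin, hlim⟩ := hF
    refine ⟨?_, ?_, ?_, ?_, ?_, ?_⟩
    · have hswap : ContinuousOn (fun p : ℝ × ℝ => (p.1⁻¹, p.2⁻¹))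
          {p : ℝ × ℝ | 0 < p.1 ∧ 0 < p.2} := by
        apply ContinuousOn.prodMk
        · exact continuousOn_fst.inv₀ (fun p hp => hp.1.ne')
        · exact continuousOn_snd.inv₀ (fun p hp => hp.2.ne')
      have hFcomp : ContinuousOn (fun p : ℝ × ℝ => F p.1⁻¹ p.2⁻¹)
          {p : ℝ × ℝ | 0 < p.1 ∧ 0 < p.2} :=
        hc.comp hswap (fun p hp => ⟨inv_pos.mpr hp.1, inv_pos.mpr hp.2⟩)
      exact hFcomp.inv₀ (fun p hp => (hpos _ _ (inv_pos.mpr hp.1) (inv_pos.mpr hp.2)).ne')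
    · exact fun x y hx hy => inv_pos.mpr (hpos _ _ (inv_pos.mpr hx) (inv_pos.mpr hy))
    · intro x x' y y' hx hy hxx hyy
      have hx' : (0:ℝ) < x' := lt_of_lt_of_le hx hxx
      have hy' : (0:ℝ) < y' := lt_of_lt_of_le hy hyy
      have h1 : F x'⁻¹ y'⁻¹ ≤ F x⁻¹ y⁻¹ :=
        hmono _ _ _ _ (inv_pos.mpr hx') (inv_pos.mpr hy')
          (inv_anti₀ hx hxx) (inv_anti₀ hy hyy)
      exact inv_anti₀ (hpos _ _ (inv_pos.mpr hx') (inv_pos.mpr hy')) h1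
    · intro c x y hc' hx hy
      show (F (c * x)⁻¹ (c * y)⁻¹)⁻¹ = c * (F x⁻¹ y⁻¹)⁻¹
      rw [mul_inv, mul_inv,
        hhom c⁻¹ x⁻¹ y⁻¹ (inv_pos.mpr hc') (inv_pos.mpr hx) (inv_pos.mpr hy),
        mul_inv, inv_inv]
    · intro x y hx hy
      have h1 : F x⁻¹ y⁻¹ ≤ (max x y)⁻¹ := by
        rcases le_total x y with h | h
        · rw [max_eq_right h]
          exact (hmin _ _ (inv_pos.mpr hx) (inv_pos.mpr hy)).trans (min_le_right _ _)
        · rw [max_eq_left h]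
          exact (hmin _ _ (inv_pos.mpr hx) (inv_pos.mpr hy)).trans (min_le_left _ _)
      have h2 := inv_anti₀ (hpos _ _ (inv_pos.mpr hx) (inv_pos.mpr hy)) h1
      rwa [inv_inv] at h2
    · intro y hy
      constructor
      · have h2 : Tendsto (fun x : ℝ => F x y⁻¹) atTop (𝓝 y⁻¹) :=
          (hlim y⁻¹ (inv_pos.mpr hy)).1
        have h3 : Tendsto (fun x : ℝ => F x⁻¹ y⁻¹) (𝓝[>] (0:ℝ)) (𝓝 y⁻¹) :=
          h2.comp tendsto_inv_nhdsGT_zero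
        have h4 := h3.inv₀ (inv_pos.mpr hy).ne'
        rwa [inv_inv] at h4
      · have h2 : Tendsto (fun x : ℝ => F y⁻¹ x) atTop (𝓝 y⁻¹) :=
          (hlim y⁻¹ (inv_pos.mpr hy)).2
        have h3 : Tendsto (fun x : ℝ => F y⁻¹ x⁻¹) (𝓝[>] (0:ℝ)) (𝓝 y⁻¹) :=
          h2.comp tendsto_inv_nhdsGT_zero
        have h4 := h3.inv₀ (inv_pos.mpr hy).ne'
        rwa [inv_inv] at h4

lemma fstar_sharp {F : ℝ → ℝ → ℝ} (hF : HPlus F ∨ HMinus F) :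
    Fstar (Fsharp F) = Fsharp (Fstar F) := by
  rcases hF with hF | hF
  · rw [Fstar_eq_pos hF, Fstar_eq_pos (hplus_sharp hF)]
  · have h1 : ¬ HPlus F := not_hplus_of_hminus hF
    have h2 : ¬ HPlus (Fsharp F) := by
      intro h
      exact h1 (hplus_sharp h)
    rw [Fstar_eq_neg h1, Fstar_eq_neg h2]
    rfl

/-! ### The sets and sup functions -/

def Uset (G : ℝ → ℝ → ℝ) (t : ℝ) : Set ℝ :=
  {z : ℝ | 1 ≤ G (Real.exp (-t)) (Real.exp (-z))}

noncomputable def UFun (G : ℝ → ℝ → ℝ) (t : ℝ) : ℝ := sSup (Uset G t)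

lemma zero_mem_Uset {G : ℝ → ℝ → ℝ} (hG : HPlus G) (t : ℝ) : (0:ℝ) ∈ Uset G t := by
  have h := hG.2.2.2.2.1 (Real.exp (-t)) 1 (Real.exp_pos _) one_pos
  have h1 : (1:ℝ) ≤ G (Real.exp (-t)) 1 := le_trans (le_max_right _ _) h
  simpa [Uset, Real.exp_zero] using h1

lemma Uset_nonempty {G : ℝ → ℝ → ℝ} (hG : HPlus G) (t : ℝ) : (Uset G t).Nonempty :=
  ⟨0, zero_mem_Uset hG t⟩

lemma Uset_bddAbove {G : ℝ → ℝ → ℝ} (hG : HPlus G) {t : ℝ} (ht : 0 < t) :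
    BddAbove (Uset G t) := by
  obtain ⟨hc, hpos, hmono, hhom, hmax, hlim⟩ := hG
  have hlt : Real.exp (-t) < 1 := by
    rw [show (1:ℝ) = Real.exp 0 by simp]
    exact Real.exp_lt_exp.mpr (by linarith)
  have h1 : Tendsto (fun z : ℝ => Real.exp (-z)) atTop (𝓝[>] (0:ℝ)) :=
    Real.tendsto_exp_atBot_nhdsGT.comp tendsto_neg_atTop_atBot
  have htend : Tendsto (fun z : ℝ => G (Real.exp (-t)) (Real.exp (-z))) atTop
      (𝓝 (Real.exp (-t))) :=
    ((hlim (Real.exp (-t)) (Real.exp_pos _)).2).comp h1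
  have hev : ∀ᶠ z in atTop, G (Real.exp (-t)) (Real.exp (-z)) < 1 :=
    htend.eventually_lt_const hlt
  obtain ⟨z₀, hz₀⟩ := eventually_atTop.mp hev
  refine ⟨z₀, fun z hz => ?_⟩
  by_contra hcon
  push_neg at hcon
  have h2 : G (Real.exp (-t)) (Real.exp (-z)) ≤ G (Real.exp (-t)) (Real.exp (-z₀)) :=
    hmono _ _ _ _ (Real.exp_pos _) (Real.exp_pos _) le_rfl
      (Real.exp_le_exp.mpr (by linarith))
  have h3 := hz₀ z₀ le_rfl
  have h4 : (1:ℝ) ≤ G (Real.exp (-t)) (Real.exp (-z)) := hz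
  linarith

lemma UFun_nonneg {G : ℝ → ℝ → ℝ} (hG : HPlus G) {t : ℝ} (ht : 0 < t) : 0 ≤ UFun G t :=
  le_csSup (Uset_bddAbove hG ht) (zero_mem_Uset hG t)

lemma UFun_antitoneOn {G : ℝ → ℝ → ℝ} (hG : HPlus G) :
    AntitoneOn (UFun G) (Set.Ioi 0) := by
  intro s hs t ht hst
  apply csSup_le_csSup (Uset_bddAbove hG hs) (Uset_nonempty hG t)
  intro z hz
  have : (1:ℝ) ≤ G (Real.exp (-t)) (Real.exp (-z)) := hz
  exact le_trans this (hG.2.2.1 _ _ _ _ (Real.exp_pos _) (Real.exp_pos _)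
    (Real.exp_le_exp.mpr (by linarith)) le_rfl)

lemma key_le {G : ℝ → ℝ → ℝ} (hG : HPlus G) {t y : ℝ} (ht : 0 < t) (hy : 0 < y)
    (h : y < UFun (Fsharp G) t) : t ≤ UFun G y := by
  obtain ⟨z, hzmem, hyz⟩ := exists_lt_of_lt_csSup (Uset_nonempty (hplus_sharp hG) t) h
  have hz' : (1:ℝ) ≤ G (Real.exp (-z)) (Real.exp (-t)) := hzmem
  have h1 : (1:ℝ) ≤ G (Real.exp (-y)) (Real.exp (-t)) :=
    le_trans hz' (hG.2.2.1 _ _ _ _ (Real.exp_pos _) (Real.exp_pos _)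
      (Real.exp_le_exp.mpr (by linarith)) le_rfl)
  exact le_csSup (Uset_bddAbove hG hy) h1

lemma key_le' {G : ℝ → ℝ → ℝ} (hG : HPlus G) {t y : ℝ} (ht : 0 < t) (hy : 0 < y)
    (h : y < UFun G t) : t ≤ UFun (Fsharp G) y :=
  key_le (hplus_sharp hG) ht hy h

end StmtNineAux

section StmtNineMain

open Topology

/-- For a ≥ 1, b ≥ 1: a·Γ_{F^#}^{(a-1,b)} = b·Γ_F^{(b-1,a)}. -/
theorem stmt9 (F : ℝ → ℝ → ℝ) (hF : HPlus F ∨ HMinus F) (a b : ℝ)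
    (ha : 1 ≤ a) (hb : 1 ≤ b) :
    ENNReal.ofReal a * Gamma (Fsharp F) (a - 1) b =
      ENNReal.ofReal b * Gamma F (b - 1) a := by
  have ha' : (0:ℝ) < a := by linarith
  have hb' : (0:ℝ) < b := by linarith
  set G := Fstar F with hGdef
  have hG : HPlus G := hplus_fstar hF
  have hGsh : HPlus (Fsharp G) := hplus_sharp hG
  set T : ℝ → ℝ := UFun G with hTdef
  set Tsh : ℝ → ℝ := UFun (Fsharp G) with hTshdef
  have hTF : TF F = T := rfl
  have hTFs : TF (Fsharp F) = Tsh := by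
    funext t
    show sSup {z : ℝ | 1 ≤ Fstar (Fsharp F) (Real.exp (-t)) (Real.exp (-z))} = _
    rw [fstar_sharp hF]
    rfl
  -- the weighted measure
  set w : ℝ → ENNReal := fun t => ENNReal.ofReal (t ^ (a-1)) with hwdef
  have hw : Measurable w := by
    apply Measurable.ennreal_ofReal
    exact (Real.continuous_rpow_const (by linarith : (0:ℝ) ≤ a - 1)).measurable
  set μa : Measure ℝ := (volume.restrict (Set.Ioi 0)).withDensity w with hμadef
  have hac : μa ≪ volume.restrict (Set.Ioi (0:ℝ)) := withDensity_absolutelyContinuous _ _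
  -- Step A: Gamma as integral wrt μa
  have hA : Gamma (Fsharp F) (a-1) b = ∫⁻ ω, ENNReal.ofReal (Tsh ω ^ b) ∂μa := by
    rw [show Gamma (Fsharp F) (a-1) b = ∫⁻ t in Set.Ioi (0:ℝ),
        ENNReal.ofReal (t ^ (a-1) * (TF (Fsharp F) t) ^ b) from rfl, hTFs, hμadef,
      lintegral_withDensity_eq_lintegral_mul_non_measurable _ hw
        (ae_of_all _ fun t => ENNReal.ofReal_lt_top)]
    apply lintegral_congr_ae
    filter_upwards [self_mem_ae_restrict (measurableSet_Ioi : MeasurableSet (Set.Ioi (0:ℝ)))]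
      with t ht
    simp only [Pi.mul_apply, hwdef]
    rw [← ENNReal.ofReal_mul (Real.rpow_nonneg (le_of_lt ht) _)]
  -- measurability and nonnegativity of Tsh wrt μa
  have hmblesh : AEMeasurable Tsh μa :=
    (aemeasurable_restrict_of_antitoneOn measurableSet_Ioi (UFun_antitoneOn hGsh)).mono_ac hac
  have hae_pos : ∀ᵐ t ∂μa, t ∈ Set.Ioi (0:ℝ) :=
    hac.ae_le (self_mem_ae_restrict measurableSet_Ioi)
  have hnnsh : 0 ≤ᵐ[μa] Tsh := by
    filter_upwards [hae_pos] with t ht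
    exact UFun_nonneg hGsh ht
  -- Step B: layer cake
  have hB : ∫⁻ ω, ENNReal.ofReal (Tsh ω ^ b) ∂μa
      = ENNReal.ofReal b *
        ∫⁻ s in Set.Ioi 0, μa {t | s ≤ Tsh t} * ENNReal.ofReal (s ^ (b-1)) :=
    lintegral_rpow_eq_lintegral_meas_le_mul μa hnnsh hmblesh hb'
  -- the countable bad set
  have hTanti : AntitoneOn T (Set.Ioi 0) := UFun_antitoneOn hG
  have hh : Antitone (T ∘ Real.exp) := by
    intro u v huv
    exact hTanti (Set.mem_Ioi.mpr (Real.exp_pos u)) (Set.mem_Ioi.mpr (Real.exp_pos v))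
      (Real.exp_le_exp.mpr huv)
  have hcnt : Set.Countable {u : ℝ | ¬ ContinuousAt (T ∘ Real.exp) u} :=
    hh.countable_not_continuousAt
  set bad : Set ℝ := Real.exp '' {u : ℝ | ¬ ContinuousAt (T ∘ Real.exp) u} with hbaddef
  have hbadnull : volume bad = 0 := (hcnt.image _).measure_zero _
  have hgood : ∀ᵐ s ∂(volume.restrict (Set.Ioi (0:ℝ))), s ∉ bad := by
    apply ae_restrict_of_ae
    rw [ae_iff]
    simpa using hbadnull
  -- singletons and the complement of Ioi 0 are μa-null
  have hsing : ∀ x : ℝ, μa {x} = 0 := by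
    intro x
    apply hac
    rw [Measure.restrict_apply (measurableSet_singleton x)]
    exact measure_mono_null Set.inter_subset_left Real.volume_singleton
  have hcompl : μa ((Set.Ioi (0:ℝ))ᶜ) = 0 := by
    apply hac
    rw [Measure.restrict_apply measurableSet_Ioi.compl, Set.compl_inter_self]
    simp
  -- value of μa on Ioo 0 c
  have hIoo : ∀ c : ℝ, 0 ≤ c → μa (Set.Ioo 0 c) = ENNReal.ofReal (c ^ a / a) := by
    intro c hc
    have hint : IntegrableOn (fun t : ℝ => t ^ (a-1)) (Set.Ioo 0 c) volume :=
      ((intervalIntegral.intervalIntegrable_rpow'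
        (by linarith : (-1:ℝ) < a - 1)).1).mono_set Set.Ioo_subset_Ioc_self
    have hnn : 0 ≤ᵐ[volume.restrict (Set.Ioo 0 c)] fun t : ℝ => t ^ (a-1) := by
      filter_upwards [self_mem_ae_restrict (measurableSet_Ioo :
        MeasurableSet (Set.Ioo (0:ℝ) c))] with t ht
      exact Real.rpow_nonneg ht.1.le _
    have hsub : Set.Ioo (0:ℝ) c ∩ Set.Ioi 0 = Set.Ioo 0 c := by
      rw [Set.inter_eq_left]
      exact fun x hx => hx.1
    rw [hμadef, withDensity_apply _ measurableSet_Ioo,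
      Measure.restrict_restrict measurableSet_Ioo, hsub]
    rw [hwdef]
    rw [← ofReal_integral_eq_lintegral_ofReal hint hnn]
    congr 1
    rw [← MeasureTheory.integral_Ioc_eq_integral_Ioo, ← intervalIntegral.integral_of_le hc,
      integral_rpow (Or.inl (by linarith : (-1:ℝ) < a - 1))]
    have h1 : a - 1 + 1 = a := by ring
    rw [h1, Real.zero_rpow (by linarith : a ≠ 0)]
    ring_nf
  -- the measure of the superlevel sets, off the bad set
  have hmeas_val : ∀ s : ℝ, 0 < s → s ∉ bad →
      μa {t : ℝ | s ≤ Tsh t} = ENNReal.ofReal (T s ^ a / a) := by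
    intro s hs hsb
    -- continuity of T at s
    have hcont : ContinuousAt (T ∘ Real.exp) (Real.log s) := by
      by_contra hcon
      exact hsb ⟨Real.log s, hcon, Real.exp_log hs⟩
    have hcontT : ContinuousAt T s := by
      have h1 : ContinuousAt ((T ∘ Real.exp) ∘ Real.log) s :=
        hcont.comp (Real.continuousAt_log hs.ne')
      apply h1.congr
      filter_upwards [isOpen_Ioi.mem_nhds (Set.mem_Ioi.mpr hs)] with x hx
      simp [Function.comp, Real.exp_log hx]
    set c : ℝ := T s with hcdef
    have hc0 : 0 ≤ c := UFun_nonneg hG hs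
    -- lower inclusion
    have incl1 : Set.Ioo 0 c ⊆ {t : ℝ | s ≤ Tsh t} := by
      intro t ht
      exact key_le' hG hs ht.1 ht.2
    -- upper inclusion
    have incl2 : {t : ℝ | s ≤ Tsh t} ∩ Set.Ioi 0 ⊆ Set.Icc 0 c := by
      rintro t ⟨hts, ht0⟩
      refine ⟨le_of_lt ht0, ?_⟩
      have hkey : ∀ y ∈ Set.Ioo (0:ℝ) s, t ≤ T y := by
        intro y hy
        exact key_le hG ht0 hy.1 (lt_of_lt_of_le hy.2 hts)
      have htend : Tendsto T (𝓝[Set.Ioo (0:ℝ) s] s) (𝓝 (T s)) :=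
        (hcontT.continuousWithinAt : ContinuousWithinAt T (Set.Ioo 0 s) s)
      have hne : (𝓝[Set.Ioo (0:ℝ) s] s).NeBot := by
        rw [nhdsWithin_Ioo_eq_nhdsLT hs]
        infer_instance
      exact ge_of_tendsto htend (eventually_mem_nhdsWithin.mono hkey)
    -- squeeze
    have hub : μa {t : ℝ | s ≤ Tsh t} ≤ ENNReal.ofReal (c ^ a / a) := by
      have hsub : {t : ℝ | s ≤ Tsh t} ⊆ (Set.Ioo 0 c ∪ ({0} ∪ {c})) ∪ (Set.Ioi (0:ℝ))ᶜ := by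
        intro t ht
        by_cases ht0 : 0 < t
        · left
          have h1 : t ∈ Set.Icc 0 c := incl2 ⟨ht, ht0⟩
          rcases lt_or_eq_of_le h1.2 with h2 | h2
          · exact Or.inl ⟨ht0, h2⟩
          · exact Or.inr (Or.inr h2)
        · exact Or.inr (by simpa using ht0)
      calc μa {t : ℝ | s ≤ Tsh t}
          ≤ μa ((Set.Ioo 0 c ∪ ({0} ∪ {c})) ∪ (Set.Ioi (0:ℝ))ᶜ) := measure_mono hsub
        _ ≤ μa (Set.Ioo 0 c ∪ ({0} ∪ {c})) + μa ((Set.Ioi (0:ℝ))ᶜ) := measure_union_le _ _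
        _ ≤ (μa (Set.Ioo 0 c) + (μa {0} + μa {c})) + μa ((Set.Ioi (0:ℝ))ᶜ) := by
            gcongr
            exact le_trans (measure_union_le _ _) (by gcongr; exact measure_union_le _ _)
        _ = μa (Set.Ioo 0 c) := by rw [hsing 0, hsing c, hcompl]; ring
        _ = ENNReal.ofReal (c ^ a / a) := hIoo c hc0
    have hlb : ENNReal.ofReal (c ^ a / a) ≤ μa {t : ℝ | s ≤ Tsh t} := by
      rw [← hIoo c hc0]
      exact measure_mono incl1
    exact le_antisymm hub hlb
  -- Step D: rewrite the integral
  have hD : ∫⁻ s in Set.Ioi 0, μa {t | s ≤ Tsh t} * ENNReal.ofReal (s ^ (b-1))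
      = ∫⁻ s in Set.Ioi 0, ENNReal.ofReal (T s ^ a / a) * ENNReal.ofReal (s ^ (b-1)) := by
    apply lintegral_congr_ae
    filter_upwards [self_mem_ae_restrict (measurableSet_Ioi :
      MeasurableSet (Set.Ioi (0:ℝ))), hgood] with s hs hsb
    rw [hmeas_val s hs hsb]
  -- assemble
  rw [hA, hB, hD]
  have hRHS : Gamma F (b-1) a
      = ∫⁻ s in Set.Ioi 0, ENNReal.ofReal (s ^ (b-1) * T s ^ a) := by
    rw [show Gamma F (b-1) a = ∫⁻ s in Set.Ioi (0:ℝ),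
        ENNReal.ofReal (s ^ (b-1) * (TF F s) ^ a) from rfl, hTF]
  rw [hRHS, ← mul_assoc, mul_comm (ENNReal.ofReal a) (ENNReal.ofReal b), mul_assoc]
  congr 1
  rw [← lintegral_const_mul' _ _ ENNReal.ofReal_ne_top]
  apply lintegral_congr_ae
  filter_upwards [self_mem_ae_restrict (measurableSet_Ioi :
    MeasurableSet (Set.Ioi (0:ℝ)))] with s hs
  have hTs : 0 ≤ T s := UFun_nonneg hG hs
  rw [← ENNReal.ofReal_mul (div_nonneg (Real.rpow_nonneg hTs a) ha'.le),
    ← ENNReal.ofReal_mul ha'.le]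
  congr 1
  field_simp

end StmtNineMain
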